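/- On a ∘-coalgebra C there is a bijective correspondence between Fourier forms ω and unitary sesquilinear forms ⟨·,·⟩ on C (viewed as a right C-comodule), given by ⟨c, d⟩_ω = ω(d∘, c) and ω(c, d) = ⟨d, c∘⟩. Under this correspondence, positive definite hermitian Fourier forms correspond to unitary inner products. -/

import Mathlib

open TensorProduct Coalgebra

variable {C : Type*} [AddCommGroup C] [Module ℂ C] [Coalgebra ℂ C]

/-- `ω` is bilinear. -/
def IsBilin (ω : C → C → ℂ) : Prop :=
  (∀ c c' d : C, ω (c + c') d = ω c d + ω c' d) ∧
  (∀ (a : ℂ) (c d : C), ω (a • c) d = a * ω c d) ∧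
  (∀ c d d' : C, ω c (d + d') = ω c d + ω c d') ∧
  (∀ (a : ℂ) (c d : C), ω c (a • d) = a * ω c d)

/-- `β` is sesquilinear: linear in the first slot, conjugate-linear in the second. -/
def IsSesqui (β : C → C → ℂ) : Prop :=
  (∀ c c' d : C, β (c + c') d = β c d + β c' d) ∧
  (∀ (a : ℂ) (c d : C), β (a • c) d = a * β c d) ∧
  (∀ c d d' : C, β c (d + d') = β c d + β c d') ∧
  (∀ (a : ℂ) (c d : C), β c (a • d) = (starRingEnd ℂ) a * β c d)

/-- `ω` is a Fourier form: `Σ ω(c, d₁) d₂ = Σ c₁ ω(c₂, d)` (Sweedler notation). -/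
def IsFourierFormFn (ω : C → C → ℂ) : Prop :=
  ∀ (c d : C) (ι₁ : Type) (s₁ : Finset ι₁) (l₁ r₁ : ι₁ → C),
    Coalgebra.comul (R := ℂ) c = ∑ i ∈ s₁, l₁ i ⊗ₜ[ℂ] r₁ i →
    ∀ (ι₂ : Type) (s₂ : Finset ι₂) (l₂ r₂ : ι₂ → C),
      Coalgebra.comul (R := ℂ) d = ∑ j ∈ s₂, l₂ j ⊗ₜ[ℂ] r₂ j →
      ∑ j ∈ s₂, ω c (l₂ j) • r₂ j = ∑ i ∈ s₁, ω (r₁ i) d • l₁ i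

/-- `β` is unitary on the right `C`-comodule `C` (coaction `Δ`):
`Σ ⟨c₁, d⟩ c₂ = Σ ⟨c, d₁⟩ d₂∘`. -/
def IsUnitaryOnC (circ : C → C) (β : C → C → ℂ) : Prop :=
  ∀ (c d : C) (ι₁ : Type) (s₁ : Finset ι₁) (l₁ r₁ : ι₁ → C),
    Coalgebra.comul (R := ℂ) c = ∑ i ∈ s₁, l₁ i ⊗ₜ[ℂ] r₁ i →
    ∀ (ι₂ : Type) (s₂ : Finset ι₂) (l₂ r₂ : ι₂ → C),
      Coalgebra.comul (R := ℂ) d = ∑ j ∈ s₂, l₂ j ⊗ₜ[ℂ] r₂ j →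
      ∑ i ∈ s₁, β (l₁ i) d • r₁ i = ∑ j ∈ s₂, β c (l₂ j) • circ (r₂ j)

/-- `ω` is positive definite and hermitian (with respect to `∘`). -/
def IsPosDefHermitian (circ : C → C) (ω : C → C → ℂ) : Prop :=
  (∀ c : C, c ≠ 0 → 0 < (ω (circ c) c).re ∧ (ω (circ c) c).im = 0) ∧
  (∀ c d : C, ω (circ c) (circ d) = (starRingEnd ℂ) (ω d c))

/-- `β` is an inner product: hermitian and positive definite. -/
def IsInnerProduct (β : C → C → ℂ) : Prop :=
  (∀ c d : C, β d c = (starRingEnd ℂ) (β c d)) ∧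
  (∀ c : C, c ≠ 0 → 0 < (β c c).re ∧ (β c c).im = 0)

/-- on a ∘-coalgebra there is a bijective correspondence between Fourier
forms and unitary sesquilinear forms, `⟨c,d⟩_ω = ω(d∘, c)`, `ω(c,d) = ⟨d, c∘⟩`; positive
definite hermitian Fourier forms correspond to unitary inner products. -/
theorem fourier_unitary_correspondence
    (circ : C → C)
    (hcadd : ∀ x y : C, circ (x + y) = circ x + circ y)
    (hcsmul : ∀ (a : ℂ) (x : C), circ (a • x) = (starRingEnd ℂ) a • circ x)
    (hcinvol : ∀ x : C, circ (circ x) = x)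
    (hcanti : ∀ (x : C) {ι : Type*} (r : Coalgebra.Repr ℂ x ι),
      Coalgebra.comul (R := ℂ) (circ x) =
        ∑ i ∈ r.index, circ (r.right i) ⊗ₜ[ℂ] circ (r.left i)) :
    (∀ ω : C → C → ℂ, IsBilin ω → IsFourierFormFn ω →
      IsSesqui (fun c d => ω (circ d) c) ∧ IsUnitaryOnC circ (fun c d => ω (circ d) c)) ∧
    (∀ β : C → C → ℂ, IsSesqui β → IsUnitaryOnC circ β →
      IsBilin (fun c d => β d (circ c)) ∧ IsFourierFormFn (fun c d => β d (circ c))) ∧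
    (∀ ω : C → C → ℂ, IsBilin ω →
      (fun c d => (fun c' d' => ω (circ d') c') d (circ c)) = ω) ∧
    (∀ β : C → C → ℂ, IsSesqui β →
      (fun c d => (fun c' d' => β d' (circ c')) (circ d) c) = β) ∧
    (∀ ω : C → C → ℂ, IsBilin ω → IsFourierFormFn ω →
      (IsPosDefHermitian circ ω ↔ IsInnerProduct (fun c d => ω (circ d) c))) := by
  -- convert an explicit representation into a `Coalgebra.Repr` in the right universe
  have mkRepr : ∀ (x : C) (ι : Type) (s : Finset ι) (l r : ι → C),
      Coalgebra.comul (R := ℂ) x = ∑ i ∈ s, l i ⊗ₜ[ℂ] r i →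
      Coalgebra.comul (R := ℂ) (circ x) =
        ∑ i ∈ s, circ (r i) ⊗ₜ[ℂ] circ (l i) := by
    intro x ι s l r hx
    have heq : ∑ i ∈ s.map (Equiv.ulift.symm.toEmbedding),
        (l ∘ ULift.down) i ⊗ₜ[ℂ] (r ∘ ULift.down) i = Coalgebra.comul (R := ℂ) x := by
      rw [Finset.sum_map, hx]; rfl
    have := hcanti x (Coalgebra.Repr.mk (s.map (Equiv.ulift.symm.toEmbedding))
      (l ∘ ULift.down) (r ∘ ULift.down) heq)
    simpa [Finset.sum_map] using this
  constructor
  · rintro ω ⟨hb1, hb2, hb3, hb4⟩ hF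
    refine ⟨⟨fun c c' d => hb3 (circ d) c c', fun a c d => hb4 a (circ d) c,
      fun c d d' => by show ω (circ (d + d')) c = _; rw [hcadd]; exact hb1 _ _ _,
      fun a c d => by show ω (circ (a • d)) c = _; rw [hcsmul]; exact hb2 _ _ _⟩, ?_⟩
    intro c d ι₁ s₁ l₁ r₁ hc ι₂ s₂ l₂ r₂ hd
    exact hF (circ d) c ι₂ s₂ (fun j => circ (r₂ j)) (fun j => circ (l₂ j))
      (mkRepr d ι₂ s₂ l₂ r₂ hd) ι₁ s₁ l₁ r₁ hc
  refine ⟨?_, ?_, ?_, ?_⟩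
  · rintro β ⟨hs1, hs2, hs3, hs4⟩ hU
    refine ⟨⟨fun c c' d => by show β d (circ (c + c')) = _; rw [hcadd]; exact hs3 _ _ _,
      fun a c d => by show β d (circ (a • c)) = _; rw [hcsmul, hs4]; simp,
      fun c d d' => hs1 d d' (circ c),
      fun a c d => hs2 a d (circ c)⟩, ?_⟩
    intro c d ι₁ s₁ l₁ r₁ hc ι₂ s₂ l₂ r₂ hd
    have := hU d (circ c) ι₂ s₂ l₂ r₂ hd ι₁ s₁ (fun i => circ (r₁ i))
      (fun i => circ (l₁ i)) (mkRepr c ι₁ s₁ l₁ r₁ hc)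
    simpa only [hcinvol] using this
  · intro ω _
    funext c d
    simp [hcinvol]
  · intro β _
    funext c d
    simp [hcinvol]
  · rintro ω ⟨hb1, hb2, hb3, hb4⟩ _
    constructor
    · rintro ⟨hpos, hherm⟩
      refine ⟨fun c d => ?_, fun c hc => hpos c hc⟩
      have := hherm c (circ d)
      rw [hcinvol] at this
      show ω (circ c) d = (starRingEnd ℂ) (ω (circ d) c)
      rw [this]
    · rintro ⟨hherm, hpos⟩
      refine ⟨fun c hc => hpos c hc, fun c d => ?_⟩
      have := hherm c (circ d)
      simp only at this
      rw [hcinvol] at this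
      exact this
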